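/- Monotonicity of the interaction Morawetz functional for the linear Schrödinger flow: Let u, v : ℝ_t × ℝ_x → ℂ be smooth solutions of i∂_t u + ∂_x² u = 0 and i∂_t v + ∂_x² v = 0 such that for each t the functions u(t,·), v(t,·) are Schwartz, with all Schwartz seminorms locally bounded in t. Define I(t) = ∬_{x > y} [ M(u(t))(x)·P(v(t))(y) − P(u(t))(x)·M(v(t))(y) ] dx dy. Then I is differentiable in t and dI/dt (t) = ∫_ℝ [ M(u(t))E(v(t)) + M(v(t))E(u(t)) − 2P(u(t))P(v(t)) ] dx = 4 ∫_ℝ |∂_x (u(t,x)·conj(v(t,x)))|² dx ≥ 0; in particular I is nondecreasing. -/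

import Mathlib

noncomputable section
open ComplexConjugate MeasureTheory

/-- Partial derivative in time of a function of `(t,x)`. -/
def pdt (u : ℝ → ℝ → ℂ) (t x : ℝ) : ℂ := deriv (fun s => u s x) t

/-- Partial derivative in space of a function of `(t,x)`. -/
def pdx (u : ℝ → ℝ → ℂ) (t x : ℝ) : ℂ := deriv (fun y => u t y) x

/-- The mass density `M(u) = |u|²` (as `u·conj u`). -/
def Mdens (u : ℝ → ℝ → ℂ) (t x : ℝ) : ℂ := u t x * conj (u t x)

/-- The momentum density `P(u) = i(conj u·∂ₓu − u·∂ₓ(conj u))`. -/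
def Pdens (u : ℝ → ℝ → ℂ) (t x : ℝ) : ℂ :=
  Complex.I * (conj (u t x) * pdx u t x - u t x * conj (pdx u t x))

/-- The energy density `E(u) = −conj u·∂ₓ²u + 2|∂ₓu|² − u·∂ₓ²(conj u)`. -/
def Edens (u : ℝ → ℝ → ℂ) (t x : ℝ) : ℂ :=
  - conj (u t x) * pdx (pdx u) t x + 2 * pdx u t x * conj (pdx u t x)
    - u t x * conj (pdx (pdx u) t x)

/-- The interaction Morawetz functional
`I(t) = ∬_{x > y} (M(u(t))(x)·P(v(t))(y) − P(u(t))(x)·M(v(t))(y)) dx dy`. -/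
def interactionI (u v : ℝ → ℝ → ℂ) (t : ℝ) : ℂ :=
  ∫ y : ℝ, ∫ x in Set.Ioi y,
    (Mdens u t x * Pdens v t y - Pdens u t x * Mdens v t y)

/-- The quartic Morawetz production term
`D(t) = ∫ (M(u)E(v) + M(v)E(u) − 2P(u)P(v)) dx`. -/
def morawetzD (u v : ℝ → ℝ → ℂ) (t : ℝ) : ℂ :=
  ∫ x : ℝ, (Mdens u t x * Edens v t x + Mdens v t x * Edens u t x
    - 2 * Pdens u t x * Pdens v t x)

open Filter Topology Set Metric

namespace IM

/-- Bundled hypotheses: jointly smooth with uniform-in-time Schwartz bounds. -/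
structure Nice (u : ℝ → ℝ → ℂ) : Prop where
  smooth : ContDiff ℝ (⊤ : ℕ∞) fun p : ℝ × ℝ => u p.1 p.2
  bnd : ∀ (k n : ℕ) (T : ℝ), ∃ C : ℝ, ∀ t x : ℝ, |t| ≤ T →
      |x| ^ k * ‖iteratedDeriv n (fun y => u t y) x‖ ≤ C

variable {u : ℝ → ℝ → ℂ}

lemma hasDerivAt_x (hu : Nice u) (t x : ℝ) :
    HasDerivAt (fun y => u t y) (fderiv ℝ (fun p : ℝ × ℝ => u p.1 p.2) (t, x) (0, 1)) x := by
  have h1 : HasDerivAt (fun y : ℝ => ((t, y) : ℝ × ℝ)) (0, 1) x :=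
    (hasDerivAt_const x t).prodMk (hasDerivAt_id x)
  have h2 : HasFDerivAt (fun p : ℝ × ℝ => u p.1 p.2)
      (fderiv ℝ (fun p : ℝ × ℝ => u p.1 p.2) (t, x)) (t, x) :=
    (hu.smooth.differentiable (by simp) (t, x)).hasFDerivAt
  exact h2.comp_hasDerivAt x h1

lemma hasDerivAt_t (hu : Nice u) (t x : ℝ) :
    HasDerivAt (fun s => u s x) (fderiv ℝ (fun p : ℝ × ℝ => u p.1 p.2) (t, x) (1, 0)) t := by
  have h1 : HasDerivAt (fun s : ℝ => ((s, x) : ℝ × ℝ)) (1, 0) t :=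
    (hasDerivAt_id t).prodMk (hasDerivAt_const t x)
  have h2 : HasFDerivAt (fun p : ℝ × ℝ => u p.1 p.2)
      (fderiv ℝ (fun p : ℝ × ℝ => u p.1 p.2) (t, x)) (t, x) :=
    (hu.smooth.differentiable (by simp) (t, x)).hasFDerivAt
  exact h2.comp_hasDerivAt t h1

lemma pdx_eq (hu : Nice u) (t x : ℝ) :
    pdx u t x = fderiv ℝ (fun p : ℝ × ℝ => u p.1 p.2) (t, x) (0, 1) :=
  (hasDerivAt_x hu t x).deriv

lemma pdt_eq (hu : Nice u) (t x : ℝ) :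
    pdt u t x = fderiv ℝ (fun p : ℝ × ℝ => u p.1 p.2) (t, x) (1, 0) :=
  (hasDerivAt_t hu t x).deriv

lemma hasDerivAt_pdx (hu : Nice u) (t x : ℝ) :
    HasDerivAt (fun y => u t y) (pdx u t x) x := by
  rw [pdx_eq hu]; exact hasDerivAt_x hu t x

lemma hasDerivAt_pdt (hu : Nice u) (t x : ℝ) :
    HasDerivAt (fun s => u s x) (pdt u t x) t := by
  rw [pdt_eq hu]; exact hasDerivAt_t hu t x

/-- smoothness of directional-derivative functions -/
lemma smooth_dir (hu : Nice u) (w : ℝ × ℝ) :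
    ContDiff ℝ (⊤ : ℕ∞) fun p : ℝ × ℝ => fderiv ℝ (fun q : ℝ × ℝ => u q.1 q.2) p w := by
  have h := (hu.smooth.fderiv_right (m := (⊤ : ℕ∞)) (by exact_mod_cast le_top))
  exact h.clm_apply contDiff_const

lemma smooth_pdx (hu : Nice u) :
    ContDiff ℝ (⊤ : ℕ∞) fun p : ℝ × ℝ => pdx u p.1 p.2 := by
  have : (fun p : ℝ × ℝ => pdx u p.1 p.2)
      = fun p : ℝ × ℝ => fderiv ℝ (fun q : ℝ × ℝ => u q.1 q.2) p (0, 1) := by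
    funext p; exact pdx_eq hu p.1 p.2
  rw [this]; exact smooth_dir hu _

lemma nice_pdx (hu : Nice u) : Nice (pdx u) := by
  refine ⟨smooth_pdx hu, fun k n T => ?_⟩
  obtain ⟨C, hC⟩ := hu.bnd k (n + 1) T
  refine ⟨C, fun t x ht => ?_⟩
  have : (fun y => pdx u t y) = deriv (fun y => u t y) := rfl
  rw [this, ← iteratedDeriv_succ']
  exact hC t x ht


lemma deriv_conj (f : ℝ → ℂ) (x : ℝ) :
    deriv (fun y => conj (f y)) x = conj (deriv f x) := by
  by_cases hf : DifferentiableAt ℝ f x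
  · have h := (hf.hasDerivAt.star).deriv
    simp only [starRingEnd_apply]
    exact h
  · have hg : ¬ DifferentiableAt ℝ (fun y => conj (f y)) x := by
      intro h
      apply hf
      have h2 := h.star
      simp only [starRingEnd_apply, star_star] at h2
      exact h2
    rw [deriv_zero_of_not_differentiableAt hf, deriv_zero_of_not_differentiableAt hg, map_zero]

lemma iteratedDeriv_conj (f : ℝ → ℂ) (n : ℕ) :
    iteratedDeriv n (fun y => conj (f y)) = fun x => conj (iteratedDeriv n f x) := by
  induction n generalizing f with
  | zero => simp [iteratedDeriv_zero]
  | succ n ih =>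
    rw [iteratedDeriv_succ', iteratedDeriv_succ']
    have : deriv (fun y => conj (f y)) = fun y => conj (deriv f y) := by
      funext y; exact deriv_conj f y
    rw [this, ih]

/-- Uniform (on compact time intervals) boundedness plus quadratic decay in space. -/
def DecBd (w : ℝ → ℝ → ℂ) : Prop :=
  ∀ T : ℝ, ∃ C : ℝ, 0 ≤ C ∧ ∀ t x : ℝ, |t| ≤ T →
    ‖w t x‖ ≤ C ∧ ‖w t x‖ * (1 + x ^ 2) ≤ C

lemma Nice.decBd (hu : Nice u) : DecBd u := by
  intro T
  obtain ⟨C0, hC0⟩ := hu.bnd 0 0 T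
  obtain ⟨C2, hC2⟩ := hu.bnd 2 0 T
  refine ⟨|C0| + |C2|, by positivity, fun t x ht => ?_⟩
  have h0 := hC0 t x ht
  have h2 := hC2 t x ht
  simp only [pow_zero, one_mul, iteratedDeriv_zero, sq_abs] at h0 h2
  constructor
  · nlinarith [le_abs_self C0, le_abs_self C2, norm_nonneg (u t x), sq_nonneg x,
      abs_nonneg C2, mul_nonneg (sq_nonneg x) (norm_nonneg (u t x))]
  · nlinarith [le_abs_self C0, le_abs_self C2, norm_nonneg (u t x), sq_nonneg x]

lemma DecBd.conj (hw : DecBd u) : DecBd (fun t x => conj (u t x)) := by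
  intro T; obtain ⟨C, hC0, hC⟩ := hw T
  exact ⟨C, hC0, fun t x ht => by simpa using hC t x ht⟩

lemma DecBd.mul {w z : ℝ → ℝ → ℂ} (hw : DecBd w) (hz : DecBd z) :
    DecBd (fun t x => w t x * z t x) := by
  intro T
  obtain ⟨C, hC0, hC⟩ := hw T
  obtain ⟨D, hD0, hD⟩ := hz T
  refine ⟨C * D, by positivity, fun t x ht => ?_⟩
  obtain ⟨h1, h2⟩ := hC t x ht
  obtain ⟨h3, h4⟩ := hD t x ht
  constructor
  · rw [norm_mul]
    exact mul_le_mul h1 h3 (norm_nonneg _) hC0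
  · rw [norm_mul, mul_assoc]
    exact mul_le_mul h1 h4 (by positivity) hC0

lemma DecBd.add {w z : ℝ → ℝ → ℂ} (hw : DecBd w) (hz : DecBd z) :
    DecBd (fun t x => w t x + z t x) := by
  intro T
  obtain ⟨C, hC0, hC⟩ := hw T
  obtain ⟨D, hD0, hD⟩ := hz T
  refine ⟨C + D, by positivity, fun t x ht => ?_⟩
  obtain ⟨h1, h2⟩ := hC t x ht
  obtain ⟨h3, h4⟩ := hD t x ht
  constructor
  · exact (norm_add_le _ _).trans (by linarith)
  · calc ‖w t x + z t x‖ * (1 + x ^ 2) ≤ (‖w t x‖ + ‖z t x‖) * (1 + x ^ 2) := by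
          have := norm_add_le (w t x) (z t x); nlinarith [sq_nonneg x]
      _ ≤ C + D := by nlinarith

lemma DecBd.neg {w : ℝ → ℝ → ℂ} (hw : DecBd w) : DecBd (fun t x => -w t x) := by
  intro T; obtain ⟨C, hC0, hC⟩ := hw T
  exact ⟨C, hC0, fun t x ht => by simpa using hC t x ht⟩

lemma DecBd.sub {w z : ℝ → ℝ → ℂ} (hw : DecBd w) (hz : DecBd z) :
    DecBd (fun t x => w t x - z t x) := by
  have := hw.add hz.neg
  simpa [sub_eq_add_neg] using this

lemma DecBd.const_mul {w : ℝ → ℝ → ℂ} (hw : DecBd w) (c : ℂ) :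
    DecBd (fun t x => c * w t x) := by
  intro T; obtain ⟨C, hC0, hC⟩ := hw T
  refine ⟨‖c‖ * C, by positivity, fun t x ht => ?_⟩
  obtain ⟨h1, h2⟩ := hC t x ht
  constructor
  · rw [norm_mul]; exact mul_le_mul_of_nonneg_left h1 (norm_nonneg c)
  · rw [norm_mul, mul_assoc]; exact mul_le_mul_of_nonneg_left h2 (norm_nonneg c)

lemma decBd_Mdens (hu : Nice u) : DecBd (Mdens u) :=
  hu.decBd.mul hu.decBd.conj

lemma decBd_Pdens (hu : Nice u) : DecBd (Pdens u) :=
  ((hu.decBd.conj.mul (nice_pdx hu).decBd).sub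
    (hu.decBd.mul (nice_pdx hu).decBd.conj)).const_mul Complex.I

lemma decBd_Edens (hu : Nice u) : DecBd (Edens u) := by
  have h2 : Nice (pdx (pdx u)) := nice_pdx (nice_pdx hu)
  have h1 : Nice (pdx u) := nice_pdx hu
  have : DecBd (fun t x => - conj (u t x) * pdx (pdx u) t x
      + 2 * pdx u t x * conj (pdx u t x) - u t x * conj (pdx (pdx u) t x)) := by
    refine DecBd.sub (DecBd.add ?_ ?_) (hu.decBd.mul h2.decBd.conj)
    · exact hu.decBd.conj.neg.mul h2.decBd
    · have := (h1.decBd.mul h1.decBd.conj).const_mul 2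
      simpa [mul_assoc] using this
  exact this


/-- The linear Schrödinger equation. -/
def Eqn (u : ℝ → ℝ → ℂ) : Prop := ∀ t x : ℝ, Complex.I * pdt u t x + pdx (pdx u) t x = 0

lemma Eqn.pdt_form {u : ℝ → ℝ → ℂ} (he : Eqn u) (t x : ℝ) :
    pdt u t x = Complex.I * pdx (pdx u) t x := by
  have h := he t x
  have : Complex.I * (Complex.I * pdt u t x + pdx (pdx u) t x) = 0 := by rw [h, mul_zero]
  have h2 : Complex.I * Complex.I * pdt u t x + Complex.I * pdx (pdx u) t x = 0 := by
    ring_nf; ring_nf at this; exact this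
  rw [Complex.I_mul_I] at h2
  linear_combination -h2

lemma pdt_pdx_comm (hu : Nice u) (t x : ℝ) :
    pdt (pdx u) t x = pdx (pdt u) t x := by
  set U : ℝ × ℝ → ℂ := fun p => u p.1 p.2 with hUdef
  have hU : ContDiff ℝ (⊤ : ℕ∞) U := hu.smooth
  have hdiff : DifferentiableAt ℝ (fderiv ℝ U) (t, x) := by
    have := (hU.fderiv_right (m := (⊤ : ℕ∞)) (by exact_mod_cast le_top)).differentiable
      (by simp)
    exact this (t, x)
  have hsymm : IsSymmSndFDerivAt ℝ U (t, x) := by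
    refine ContDiffAt.isSymmSndFDerivAt (hU.contDiffAt) ?_
    rw [minSmoothness_of_isRCLikeNormedField]; exact WithTop.coe_le_coe.2 (le_top : (2 : ℕ∞) ≤ ⊤)
  have key : ∀ w w' : ℝ × ℝ,
      fderiv ℝ (fun p => fderiv ℝ U p w) (t, x) w' = fderiv ℝ (fderiv ℝ U) (t, x) w' w := by
    intro w w'
    rw [fderiv_clm_apply hdiff (differentiableAt_const w)]
    simp
  have funeq1 : (fun p : ℝ × ℝ => pdx u p.1 p.2) = (fun p => fderiv ℝ U p (0, 1)) := by
    funext p; exact pdx_eq hu p.1 p.2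
  have funeq2 : (fun p : ℝ × ℝ => pdt u p.1 p.2) = (fun p => fderiv ℝ U p (1, 0)) := by
    funext p; exact pdt_eq hu p.1 p.2
  have hx1 : HasDerivAt (fun y : ℝ => ((t, y) : ℝ × ℝ)) (0, 1) x :=
    (hasDerivAt_const x t).prodMk (hasDerivAt_id x)
  have ht1 : HasDerivAt (fun s : ℝ => ((s, x) : ℝ × ℝ)) (1, 0) t :=
    (hasDerivAt_id t).prodMk (hasDerivAt_const t x)
  have hd1 : DifferentiableAt ℝ (fun p : ℝ × ℝ => fderiv ℝ U p (0, 1)) (t, x) :=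
    ((smooth_dir hu (0, 1)).differentiable (by simp)) (t, x)
  have hd2 : DifferentiableAt ℝ (fun p : ℝ × ℝ => fderiv ℝ U p (1, 0)) (t, x) :=
    ((smooth_dir hu (1, 0)).differentiable (by simp)) (t, x)
  have e1 : pdt (pdx u) t x = fderiv ℝ (fun p => fderiv ℝ U p (0, 1)) (t, x) (1, 0) := by
    have h := hd1.hasFDerivAt.comp_hasDerivAt t ht1
    have h2 : HasDerivAt (fun s => pdx u s x)
        (fderiv ℝ (fun p => fderiv ℝ U p (0, 1)) (t, x) (1, 0)) t := by
      have : (fun s => pdx u s x) = fun s => fderiv ℝ U (s, x) (0, 1) := by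
        funext s; exact pdx_eq hu s x
      rw [this]; exact h
    exact h2.deriv
  have e2 : pdx (pdt u) t x = fderiv ℝ (fun p => fderiv ℝ U p (1, 0)) (t, x) (0, 1) := by
    have h := hd2.hasFDerivAt.comp_hasDerivAt x hx1
    have h2 : HasDerivAt (fun y => pdt u t y)
        (fderiv ℝ (fun p => fderiv ℝ U p (1, 0)) (t, x) (0, 1)) x := by
      have : (fun y => pdt u t y) = fun y => fderiv ℝ U (t, y) (1, 0) := by
        funext y; exact pdt_eq hu t y
      rw [this]; exact h
    exact h2.deriv
  rw [e1, e2, key (0, 1) (1, 0), key (1, 0) (0, 1)]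
  exact (hsymm (0, 1) (1, 0)).symm


lemma _root_.HasDerivAt.conjC {f : ℝ → ℂ} {f' : ℂ} {x : ℝ} (h : HasDerivAt f f' x) :
    HasDerivAt (fun y => conj (f y)) (conj f') x := by
  simp only [starRingEnd_apply]
  exact h.star

lemma Eqn.pdx_eqn (hu : Nice u) (he : Eqn u) : Eqn (pdx u) := by
  intro t x
  have h1 : pdt (pdx u) t x = Complex.I * pdx (pdx (pdx u)) t x := by
    rw [pdt_pdx_comm hu]
    have hf : (fun y => pdt u t y) = fun y => Complex.I * pdx (pdx u) t y := by
      funext y; exact he.pdt_form t y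
    have h2 := (hasDerivAt_pdx (nice_pdx (nice_pdx hu)) t x).const_mul Complex.I
    have : pdx (pdt u) t x = deriv (fun y => pdt u t y) x := rfl
    rw [this, hf]
    exact h2.deriv
  rw [h1]
  have : Complex.I * (Complex.I * pdx (pdx (pdx u)) t x)
      = (Complex.I * Complex.I) * pdx (pdx (pdx u)) t x := by ring
  rw [this, Complex.I_mul_I]
  ring

/-! ### Spatial derivatives of the densities -/

lemma hasDerivAt_Mdens_x (hu : Nice u) (t x : ℝ) :
    HasDerivAt (fun y => Mdens u t y)
      (pdx u t x * conj (u t x) + u t x * conj (pdx u t x)) x :=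
  (hasDerivAt_pdx hu t x).mul (hasDerivAt_pdx hu t x).conjC

lemma pdx_Mdens_eq (hu : Nice u) (t x : ℝ) :
    pdx (Mdens u) t x = pdx u t x * conj (u t x) + u t x * conj (pdx u t x) :=
  (hasDerivAt_Mdens_x hu t x).deriv

lemma hasDerivAt_Pdens_x (hu : Nice u) (t x : ℝ) :
    HasDerivAt (fun y => Pdens u t y)
      (Complex.I * (conj (u t x) * pdx (pdx u) t x - u t x * conj (pdx (pdx u) t x))) x := by
  have h0 := hasDerivAt_pdx hu t x
  have h1 := hasDerivAt_pdx (nice_pdx hu) t x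
  have hraw : HasDerivAt (fun y => Pdens u t y)
      (Complex.I * ((conj (pdx u t x) * pdx u t x + conj (u t x) * pdx (pdx u) t x)
        - (pdx u t x * conj (pdx u t x) + u t x * conj (pdx (pdx u) t x)))) x :=
    ((h0.conjC.mul h1).sub (h0.mul h1.conjC)).const_mul Complex.I
  convert hraw using 1
  ring

lemma pdx_Pdens_eq (hu : Nice u) (t x : ℝ) :
    pdx (Pdens u) t x
      = Complex.I * (conj (u t x) * pdx (pdx u) t x - u t x * conj (pdx (pdx u) t x)) :=
  (hasDerivAt_Pdens_x hu t x).deriv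

lemma hasDerivAt_Edens_x (hu : Nice u) (t x : ℝ) :
    HasDerivAt (fun y => Edens u t y)
      (conj (pdx u t x) * pdx (pdx u) t x + pdx u t x * conj (pdx (pdx u) t x)
        - conj (u t x) * pdx (pdx (pdx u)) t x - u t x * conj (pdx (pdx (pdx u)) t x)) x := by
  have h0 := hasDerivAt_pdx hu t x
  have h1 := hasDerivAt_pdx (nice_pdx hu) t x
  have h2 := hasDerivAt_pdx (nice_pdx (nice_pdx hu)) t x
  have hraw : HasDerivAt (fun y => Edens u t y)
      (((-(conj (pdx u t x)) * pdx (pdx u) t x + (- conj (u t x)) * pdx (pdx (pdx u)) t x)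
        + (2 * pdx (pdx u) t x * conj (pdx u t x) + 2 * pdx u t x * conj (pdx (pdx u) t x)))
        - (pdx u t x * conj (pdx (pdx u) t x) + u t x * conj (pdx (pdx (pdx u)) t x))) x := by
    refine HasDerivAt.sub (HasDerivAt.add ?_ ?_) (h0.mul h2.conjC)
    · exact (h0.conjC.neg.mul h2)
    · exact ((h1.const_mul (2 : ℂ)).mul h1.conjC)
  convert hraw using 1
  ring

lemma pdx_Edens_eq (hu : Nice u) (t x : ℝ) :
    pdx (Edens u) t x
      = conj (pdx u t x) * pdx (pdx u) t x + pdx u t x * conj (pdx (pdx u) t x)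
        - conj (u t x) * pdx (pdx (pdx u)) t x - u t x * conj (pdx (pdx (pdx u)) t x) :=
  (hasDerivAt_Edens_x hu t x).deriv

/-! ### Time derivatives of the densities -/

lemma hasDerivAt_Mdens_t (hu : Nice u) (he : Eqn u) (t x : ℝ) :
    HasDerivAt (fun s => Mdens u s x) (pdx (Pdens u) t x) t := by
  have h0 := hasDerivAt_pdt hu t x
  have hraw : HasDerivAt (fun s => Mdens u s x)
      (pdt u t x * conj (u t x) + u t x * conj (pdt u t x)) t := h0.mul h0.conjC
  rw [pdx_Pdens_eq hu t x]
  convert hraw using 1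
  rw [he.pdt_form t x]
  simp only [map_mul, Complex.conj_I]
  ring

lemma hasDerivAt_Pdens_t (hu : Nice u) (he : Eqn u) (t x : ℝ) :
    HasDerivAt (fun s => Pdens u s x) (pdx (Edens u) t x) t := by
  have h0 := hasDerivAt_pdt hu t x
  have h1 := hasDerivAt_pdt (nice_pdx hu) t x
  have hraw : HasDerivAt (fun s => Pdens u s x)
      (Complex.I * ((conj (pdt u t x) * pdx u t x + conj (u t x) * pdt (pdx u) t x)
        - (pdt u t x * conj (pdx u t x) + u t x * conj (pdt (pdx u) t x)))) t :=
    ((h0.conjC.mul h1).sub (h0.mul h1.conjC)).const_mul Complex.I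
  rw [pdx_Edens_eq hu t x]
  convert hraw using 1
  rw [he.pdt_form t x, (he.pdx_eqn hu).pdt_form t x]
  simp only [map_mul, Complex.conj_I]
  linear_combination (conj (pdx u t x) * pdx (pdx u) t x + pdx u t x * conj (pdx (pdx u) t x)
    - conj (u t x) * pdx (pdx (pdx u)) t x - u t x * conj (pdx (pdx (pdx u)) t x)) * Complex.I_sq


/-! ### Continuity and integrability utilities -/

lemma _root_.Continuous.conjC {α : Type*} [TopologicalSpace α] {f : α → ℂ}
    (h : Continuous f) : Continuous fun x => conj (f x) := by
  simp only [starRingEnd_apply]; exact h.star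

lemma contx (hu : Nice u) (t : ℝ) : Continuous fun x => u t x :=
  hu.smooth.continuous.comp (continuous_const.prodMk continuous_id)

lemma contx_Mdens (hu : Nice u) (t : ℝ) : Continuous fun x => Mdens u t x :=
  (contx hu t).mul (contx hu t).conjC

lemma contx_Pdens (hu : Nice u) (t : ℝ) : Continuous fun x => Pdens u t x :=
  continuous_const.mul
    (((contx hu t).conjC.mul (contx (nice_pdx hu) t)).sub
      ((contx hu t).mul (contx (nice_pdx hu) t).conjC))

lemma contx_Edens (hu : Nice u) (t : ℝ) : Continuous fun x => Edens u t x := by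
  have h0 := contx hu t
  have h1 := contx (nice_pdx hu) t
  have h2 := contx (nice_pdx (nice_pdx hu)) t
  exact ((h0.conjC.neg.mul h2).add ((continuous_const.mul h1).mul h1.conjC)).sub
    (h0.mul h2.conjC)

lemma contx_pdx_Pdens (hu : Nice u) (t : ℝ) : Continuous fun x => pdx (Pdens u) t x := by
  have : (fun x => pdx (Pdens u) t x) = fun x =>
      Complex.I * (conj (u t x) * pdx (pdx u) t x - u t x * conj (pdx (pdx u) t x)) := by
    funext x; exact pdx_Pdens_eq hu t x
  rw [this]
  have h0 := contx hu t
  have h2 := contx (nice_pdx (nice_pdx hu)) t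
  exact continuous_const.mul ((h0.conjC.mul h2).sub (h0.mul h2.conjC))

lemma contx_pdx_Edens (hu : Nice u) (t : ℝ) : Continuous fun x => pdx (Edens u) t x := by
  have : (fun x => pdx (Edens u) t x) = fun x =>
      conj (pdx u t x) * pdx (pdx u) t x + pdx u t x * conj (pdx (pdx u) t x)
        - conj (u t x) * pdx (pdx (pdx u)) t x - u t x * conj (pdx (pdx (pdx u)) t x) := by
    funext x; exact pdx_Edens_eq hu t x
  rw [this]
  have h0 := contx hu t
  have h1 := contx (nice_pdx hu) t
  have h2 := contx (nice_pdx (nice_pdx hu)) t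
  have h3 := contx (nice_pdx (nice_pdx (nice_pdx hu))) t
  exact (((h1.conjC.mul h2).add (h1.mul h2.conjC)).sub (h0.conjC.mul h3)).sub (h0.mul h3.conjC)

/-- decay ⇒ pointwise domination by `C (1+x²)⁻¹`. -/
lemma DecBd.pointwise {w : ℝ → ℝ → ℂ} (hd : DecBd w) (T : ℝ) :
    ∃ C : ℝ, 0 ≤ C ∧ ∀ t x : ℝ, |t| ≤ T → ‖w t x‖ ≤ C * (1 + x ^ 2)⁻¹ := by
  obtain ⟨C, hC0, hC⟩ := hd T
  refine ⟨C, hC0, fun t x ht => ?_⟩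
  have hpos : (0 : ℝ) < 1 + x ^ 2 := by positivity
  have := (hC t x ht).2
  calc ‖w t x‖ = ‖w t x‖ * (1 + x ^ 2) * (1 + x ^ 2)⁻¹ := by field_simp
    _ ≤ C * (1 + x ^ 2)⁻¹ := by
        apply mul_le_mul_of_nonneg_right this (by positivity)

lemma DecBd.integrable {w : ℝ → ℝ → ℂ} (hd : DecBd w) (t : ℝ)
    (hc : Continuous fun x => w t x) : Integrable fun x => w t x := by
  obtain ⟨C, hC0, hC⟩ := hd.pointwise |t|
  refine Integrable.mono' (integrable_inv_one_add_sq.const_mul C)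
    hc.aestronglyMeasurable (ae_of_all _ fun x => ?_)
  simpa using hC t x le_rfl

lemma aux_tendsto_sq_atTop : Tendsto (fun x : ℝ => 1 + x ^ 2) atTop atTop := by
  have h : Tendsto (fun x : ℝ => x ^ 2) atTop atTop := tendsto_pow_atTop two_ne_zero
  exact tendsto_atTop_add_const_left atTop 1 h

lemma aux_tendsto_sq_atBot : Tendsto (fun x : ℝ => 1 + x ^ 2) atBot atTop := by
  have h0 : Tendsto (fun x : ℝ => x ^ 2) atTop atTop := tendsto_pow_atTop two_ne_zero
  have h : Tendsto (fun x : ℝ => x ^ 2) atBot atTop := by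
    have := h0.comp tendsto_abs_atBot_atTop
    refine this.congr fun x => ?_
    simp [sq_abs]
  exact tendsto_atTop_add_const_left atBot 1 h

lemma DecBd.tendsto_top {w : ℝ → ℝ → ℂ} (hd : DecBd w) (t : ℝ) :
    Tendsto (fun x => w t x) atTop (𝓝 0) := by
  obtain ⟨C, hC0, hC⟩ := hd.pointwise |t|
  refine squeeze_zero_norm (fun x => hC t x le_rfl) ?_
  simpa using (aux_tendsto_sq_atTop.inv_tendsto_atTop).const_mul C

lemma DecBd.tendsto_bot {w : ℝ → ℝ → ℂ} (hd : DecBd w) (t : ℝ) :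
    Tendsto (fun x => w t x) atBot (𝓝 0) := by
  obtain ⟨C, hC0, hC⟩ := hd.pointwise |t|
  refine squeeze_zero_norm (fun x => hC t x le_rfl) ?_
  simpa using (aux_tendsto_sq_atBot.inv_tendsto_atTop).const_mul C


/-! ### The Morawetz production identity (fixed time) -/

variable {v : ℝ → ℝ → ℂ}

lemma hasDerivAt_uv (hu : Nice u) (hv : Nice v) (t x : ℝ) :
    HasDerivAt (fun y => u t y * conj (v t y))
      (pdx u t x * conj (v t x) + u t x * conj (pdx v t x)) x :=
  (hasDerivAt_pdx hu t x).mul (hasDerivAt_pdx hv t x).conjC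

lemma deriv_uv (hu : Nice u) (hv : Nice v) (t x : ℝ) :
    deriv (fun y => u t y * conj (v t y)) x
      = pdx u t x * conj (v t x) + u t x * conj (pdx v t x) :=
  (hasDerivAt_uv hu hv t x).deriv

/-- auxiliary function for the spatial integration by parts -/
def Gd (v : ℝ → ℝ → ℂ) (t x : ℝ) : ℂ := conj (v t x) * pdx v t x + v t x * conj (pdx v t x)

lemma hasDerivAt_Gd (hv : Nice v) (t x : ℝ) :
    HasDerivAt (fun y => Gd v t y)
      (conj (pdx v t x) * pdx v t x + conj (v t x) * pdx (pdx v) t x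
        + pdx v t x * conj (pdx v t x) + v t x * conj (pdx (pdx v) t x)) x := by
  have h0 := hasDerivAt_pdx hv t x
  have h1 := hasDerivAt_pdx (nice_pdx hv) t x
  have h := (h0.conjC.mul h1).add (h0.mul h1.conjC)
  refine h.congr_deriv ?_
  ring

lemma decBd_Gd (hv : Nice v) : DecBd (Gd v) :=
  (hv.decBd.conj.mul (nice_pdx hv).decBd).add (hv.decBd.mul (nice_pdx hv).decBd.conj)

lemma contx_Gd (hv : Nice v) (t : ℝ) : Continuous fun x => Gd v t x :=
  ((contx hv t).conjC.mul (contx (nice_pdx hv) t)).add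
    ((contx hv t).mul (contx (nice_pdx hv) t).conjC)

lemma hasDerivAt_SW (hu : Nice u) (hv : Nice v) (t x : ℝ) :
    HasDerivAt (fun y => Mdens u t y * Gd v t y + Mdens v t y * Gd u t y)
      (4 * (deriv (fun y => u t y * conj (v t y)) x
            * conj (deriv (fun y => u t y * conj (v t y)) x))
        - (Mdens u t x * Edens v t x + Mdens v t x * Edens u t x
          - 2 * Pdens u t x * Pdens v t x)) x := by
  have raw := ((hasDerivAt_Mdens_x hu t x).mul (hasDerivAt_Gd hv t x)).add
    ((hasDerivAt_Mdens_x hv t x).mul (hasDerivAt_Gd hu t x))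
  refine raw.congr_deriv ?_
  symm
  rw [deriv_uv hu hv t x]
  simp only [Mdens, Pdens, Edens, Gd, map_add, map_mul, Complex.conj_conj, Complex.conj_I]
  linear_combination (2 * ((conj (u t x) * pdx u t x - u t x * conj (pdx u t x))
    * (conj (v t x) * pdx v t x - v t x * conj (pdx v t x)))) * Complex.I_sq

lemma decBd_S (hu : Nice u) (hv : Nice v) :
    DecBd (fun t x => Mdens u t x * Edens v t x + Mdens v t x * Edens u t x
      - 2 * Pdens u t x * Pdens v t x) :=
  (((decBd_Mdens hu).mul (decBd_Edens hv)).add ((decBd_Mdens hv).mul (decBd_Edens hu))).sub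
    (((decBd_Pdens hu).const_mul 2).mul (decBd_Pdens hv))

lemma contx_S (hu : Nice u) (hv : Nice v) (t : ℝ) :
    Continuous (fun x => Mdens u t x * Edens v t x + Mdens v t x * Edens u t x
      - 2 * Pdens u t x * Pdens v t x) :=
  (((contx_Mdens hu t).mul (contx_Edens hv t)).add
    ((contx_Mdens hv t).mul (contx_Edens hu t))).sub
    ((continuous_const.mul (contx_Pdens hu t)).mul (contx_Pdens hv t))

lemma integrable_S (hu : Nice u) (hv : Nice v) (t : ℝ) :
    Integrable (fun x => Mdens u t x * Edens v t x + Mdens v t x * Edens u t x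
      - 2 * Pdens u t x * Pdens v t x) :=
  (decBd_S hu hv).integrable t (contx_S hu hv t)

lemma decBd_W (hu : Nice u) (hv : Nice v) :
    DecBd (fun t x => (pdx u t x * conj (v t x) + u t x * conj (pdx v t x))
      * conj (pdx u t x * conj (v t x) + u t x * conj (pdx v t x))) := by
  have h : DecBd (fun t x => pdx u t x * conj (v t x) + u t x * conj (pdx v t x)) :=
    ((nice_pdx hu).decBd.mul hv.decBd.conj).add (hu.decBd.mul (nice_pdx hv).decBd.conj)
  exact h.mul h.conj

lemma integrable_W (hu : Nice u) (hv : Nice v) (t : ℝ) :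
    Integrable (fun x => deriv (fun y => u t y * conj (v t y)) x
      * conj (deriv (fun y => u t y * conj (v t y)) x)) := by
  have hfun : (fun x => deriv (fun y => u t y * conj (v t y)) x
      * conj (deriv (fun y => u t y * conj (v t y)) x))
      = fun x => (pdx u t x * conj (v t x) + u t x * conj (pdx v t x))
        * conj (pdx u t x * conj (v t x) + u t x * conj (pdx v t x)) := by
    funext x; rw [deriv_uv hu hv t x]
  rw [hfun]
  refine (decBd_W hu hv).integrable t ?_
  have h : Continuous (fun x => pdx u t x * conj (v t x) + u t x * conj (pdx v t x)) :=
    ((contx (nice_pdx hu) t).mul (contx hv t).conjC).add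
      ((contx hu t).mul (contx (nice_pdx hv) t).conjC)
  exact h.mul h.conjC

lemma morawetz_identity (hu : Nice u) (hv : Nice v) (t : ℝ) :
    morawetzD u v t = 4 * ∫ x : ℝ, (deriv (fun y => u t y * conj (v t y)) x
      * conj (deriv (fun y => u t y * conj (v t y)) x)) := by
  have hS := integrable_S hu hv t
  have hW := integrable_W hu hv t
  have hR : Integrable (fun x => Mdens u t x * Gd v t x + Mdens v t x * Gd u t x) :=
    (((decBd_Mdens hu).mul (decBd_Gd hv)).add ((decBd_Mdens hv).mul (decBd_Gd hu))).integrable t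
      (((contx_Mdens hu t).mul (contx_Gd hv t)).add ((contx_Mdens hv t).mul (contx_Gd hu t)))
  have hzero := integral_eq_zero_of_hasDerivAt_of_integrable
    (fun x => hasDerivAt_SW hu hv t x) ((hW.const_mul 4).sub hS) hR
  rw [integral_sub (hW.const_mul 4) hS, sub_eq_zero] at hzero
  have : morawetzD u v t = ∫ x, (Mdens u t x * Edens v t x + Mdens v t x * Edens u t x
      - 2 * Pdens u t x * Pdens v t x) := rfl
  rw [this, ← hzero, integral_const_mul]

lemma morawetzD_re_nonneg (hu : Nice u) (hv : Nice v) (t : ℝ) :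
    0 ≤ (morawetzD u v t).re := by
  rw [morawetz_identity hu hv t]
  have hW := integrable_W hu hv t
  have h1 : ((4 : ℂ) * ∫ x : ℝ, (deriv (fun y => u t y * conj (v t y)) x
      * conj (deriv (fun y => u t y * conj (v t y)) x))).re
      = 4 * (∫ x : ℝ, (deriv (fun y => u t y * conj (v t y)) x
        * conj (deriv (fun y => u t y * conj (v t y)) x))).re := by
    simp [Complex.mul_re]
  rw [h1]
  have h2 := integral_re hW
  simp only [RCLike.re_to_complex] at h2
  rw [← h2]
  have h3 : 0 ≤ ∫ x : ℝ, (deriv (fun y => u t y * conj (v t y)) x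
      * conj (deriv (fun y => u t y * conj (v t y)) x)).re := by
    refine integral_nonneg fun x => ?_
    rw [Complex.mul_conj]
    simp [Complex.normSq_nonneg]
  linarith


/-! ### More decay/integrability lemmas and FTC tools -/

lemma decBd_pdx_Pdens (hu : Nice u) : DecBd (pdx (Pdens u)) := by
  have h : pdx (Pdens u) = fun t x =>
      Complex.I * (conj (u t x) * pdx (pdx u) t x - u t x * conj (pdx (pdx u) t x)) := by
    funext t x; exact pdx_Pdens_eq hu t x
  rw [h]
  exact ((hu.decBd.conj.mul (nice_pdx (nice_pdx hu)).decBd).sub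
    (hu.decBd.mul (nice_pdx (nice_pdx hu)).decBd.conj)).const_mul Complex.I

lemma decBd_pdx_Edens (hu : Nice u) : DecBd (pdx (Edens u)) := by
  have h : pdx (Edens u) = fun t x =>
      conj (pdx u t x) * pdx (pdx u) t x + pdx u t x * conj (pdx (pdx u) t x)
        - conj (u t x) * pdx (pdx (pdx u)) t x - u t x * conj (pdx (pdx (pdx u)) t x) := by
    funext t x; exact pdx_Edens_eq hu t x
  rw [h]
  have h1 := (nice_pdx hu).decBd
  have h2 := (nice_pdx (nice_pdx hu)).decBd
  have h3 := (nice_pdx (nice_pdx (nice_pdx hu))).decBd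
  exact (((h1.conj.mul h2).add (h1.mul h2.conj)).sub (hu.decBd.conj.mul h3)).sub
    (hu.decBd.mul h3.conj)

lemma integrable_Mdens (hu : Nice u) (t : ℝ) : Integrable (fun x => Mdens u t x) :=
  (decBd_Mdens hu).integrable t (contx_Mdens hu t)

lemma integrable_Pdens (hu : Nice u) (t : ℝ) : Integrable (fun x => Pdens u t x) :=
  (decBd_Pdens hu).integrable t (contx_Pdens hu t)

lemma integrable_Edens (hu : Nice u) (t : ℝ) : Integrable (fun x => Edens u t x) :=
  (decBd_Edens hu).integrable t (contx_Edens hu t)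

lemma integrable_pdx_Pdens (hu : Nice u) (t : ℝ) : Integrable (fun x => pdx (Pdens u) t x) :=
  (decBd_pdx_Pdens hu).integrable t (contx_pdx_Pdens hu t)

lemma integrable_pdx_Edens (hu : Nice u) (t : ℝ) : Integrable (fun x => pdx (Edens u) t x) :=
  (decBd_pdx_Edens hu).integrable t (contx_pdx_Edens hu t)

lemma hasDerivAt_Pdens_x' (hu : Nice u) (t x : ℝ) :
    HasDerivAt (fun z => Pdens u t z) (pdx (Pdens u) t x) x := by
  rw [pdx_Pdens_eq hu t x]; exact hasDerivAt_Pdens_x hu t x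

lemma hasDerivAt_Edens_x' (hu : Nice u) (t x : ℝ) :
    HasDerivAt (fun z => Edens u t z) (pdx (Edens u) t x) x := by
  rw [pdx_Edens_eq hu t x]; exact hasDerivAt_Edens_x hu t x

lemma integral_Ioi_pdx_Pdens (hu : Nice u) (t y : ℝ) :
    ∫ x in Ioi y, pdx (Pdens u) t x = - Pdens u t y := by
  have h := integral_Ioi_of_hasDerivAt_of_tendsto' (f := fun z => Pdens u t z)
    (f' := fun z => pdx (Pdens u) t z) (a := y) (m := 0)
    (fun x _ => hasDerivAt_Pdens_x' hu t x)
    ((integrable_pdx_Pdens hu t).integrableOn)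
    ((decBd_Pdens hu).tendsto_top t)
  simpa using h

lemma integral_Ioi_pdx_Edens (hu : Nice u) (t y : ℝ) :
    ∫ x in Ioi y, pdx (Edens u) t x = - Edens u t y := by
  have h := integral_Ioi_of_hasDerivAt_of_tendsto' (f := fun z => Edens u t z)
    (f' := fun z => pdx (Edens u) t z) (a := y) (m := 0)
    (fun x _ => hasDerivAt_Edens_x' hu t x)
    ((integrable_pdx_Edens hu t).integrableOn)
    ((decBd_Edens hu).tendsto_top t)
  simpa using h

lemma hasDerivAt_tail (f : ℝ → ℂ) (hf : Integrable f) (hc : Continuous f) (y : ℝ) :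
    HasDerivAt (fun z => ∫ x in Ioi z, f x) (- f y) y := by
  have hA : (fun z => ∫ x in Ioi z, f x)
      = fun z => ((∫ x, f x) - (∫ x in Iic (0:ℝ), f x)) - ∫ x in (0:ℝ)..z, f x := by
    funext z
    have h1 := intervalIntegral.integral_Iic_add_Ioi (b := z) hf.integrableOn hf.integrableOn
    have h2 := intervalIntegral.integral_Iic_sub_Iic (a := (0:ℝ)) (b := z)
      hf.integrableOn hf.integrableOn
    linear_combination h1 - h2
  rw [hA]
  have hFTC : HasDerivAt (fun z => ∫ x in (0:ℝ)..z, f x) (f y) y :=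
    intervalIntegral.integral_hasDerivAt_right (a := 0) (b := y)
      (hf.intervalIntegrable) (hc.aestronglyMeasurable.stronglyMeasurableAtFilter)
      hc.continuousAt
  exact ((hasDerivAt_const y ((∫ x, f x) - (∫ x in Iic (0:ℝ), f x))).sub hFTC).congr_deriv (zero_sub _)

lemma tail_bound (f : ℝ → ℂ) (hf : Integrable f) (y : ℝ) :
    ‖∫ x in Ioi y, f x‖ ≤ ∫ x, ‖f x‖ :=
  (norm_integral_le_integral_norm _).trans
    (setIntegral_le_integral hf.norm (ae_of_all _ fun x => norm_nonneg _))


/-! ### The interaction functional: derivative in time -/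

def Gfun (u v : ℝ → ℝ → ℂ) (t y x : ℝ) : ℂ :=
  Mdens u t x * Pdens v t y - Pdens u t x * Mdens v t y

def Gfun' (u v : ℝ → ℝ → ℂ) (t y x : ℝ) : ℂ :=
  pdx (Pdens u) t x * Pdens v t y + Mdens u t x * pdx (Edens v) t y
    - (pdx (Edens u) t x * Mdens v t y + Pdens u t x * pdx (Pdens v) t y)

def Ffun (u v : ℝ → ℝ → ℂ) (t : ℝ) (p : ℝ × ℝ) : ℂ :=
  (Ioi p.1).indicator (fun x => Gfun u v t p.1 x) p.2

def Ffun' (u v : ℝ → ℝ → ℂ) (t : ℝ) (p : ℝ × ℝ) : ℂ :=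
  (Ioi p.1).indicator (fun x => Gfun' u v t p.1 x) p.2

lemma prod_bound {a b : ℂ} {Ca Cb X Y : ℝ} (ha : ‖a‖ ≤ Ca * X) (hb : ‖b‖ ≤ Cb * Y)
    (hX : 0 ≤ X) (hY : 0 ≤ Y) (hCa : 0 ≤ Ca) (hCb : 0 ≤ Cb) :
    ‖a * b‖ ≤ (Ca * Cb) * (X * Y) := by
  rw [norm_mul]
  nlinarith [norm_nonneg a, norm_nonneg b]

lemma Gbound (hu : Nice u) (hv : Nice v) (T : ℝ) :
    ∃ K : ℝ, 0 ≤ K ∧ ∀ t y x : ℝ, |t| ≤ T →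
      ‖Gfun u v t y x‖ ≤ K * ((1 + x ^ 2)⁻¹ * (1 + y ^ 2)⁻¹) ∧
      ‖Gfun' u v t y x‖ ≤ K * ((1 + x ^ 2)⁻¹ * (1 + y ^ 2)⁻¹) := by
  obtain ⟨c1, hc1, h1⟩ := (decBd_Mdens hu).pointwise T
  obtain ⟨c2, hc2, h2⟩ := (decBd_Pdens hu).pointwise T
  obtain ⟨c3, hc3, h3⟩ := (decBd_Edens hu).pointwise T
  obtain ⟨c4, hc4, h4⟩ := (decBd_pdx_Pdens hu).pointwise T
  obtain ⟨c5, hc5, h5⟩ := (decBd_pdx_Edens hu).pointwise T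
  obtain ⟨d1, hd1, k1⟩ := (decBd_Mdens hv).pointwise T
  obtain ⟨d2, hd2, k2⟩ := (decBd_Pdens hv).pointwise T
  obtain ⟨d3, hd3, k3⟩ := (decBd_Edens hv).pointwise T
  obtain ⟨d4, hd4, k4⟩ := (decBd_pdx_Pdens hv).pointwise T
  obtain ⟨d5, hd5, k5⟩ := (decBd_pdx_Edens hv).pointwise T
  refine ⟨(c1 * d2 + c2 * d1) + (c4 * d2 + c1 * d5 + c5 * d1 + c2 * d4), by positivity,
    fun t y x ht => ?_⟩
  have hX : (0:ℝ) ≤ (1 + x ^ 2)⁻¹ := by positivity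
  have hY : (0:ℝ) ≤ (1 + y ^ 2)⁻¹ := by positivity
  have hZ : (0:ℝ) ≤ (1 + x ^ 2)⁻¹ * (1 + y ^ 2)⁻¹ := by positivity
  constructor
  · have b1 := prod_bound (h1 t x ht) (k2 t y ht) hX hY hc1 hd2
    have b2 := prod_bound (h2 t x ht) (k1 t y ht) hX hY hc2 hd1
    have := (norm_sub_le (Mdens u t x * Pdens v t y) (Pdens u t x * Mdens v t y)).trans
      (add_le_add b1 b2)
    have hrest : 0 ≤ (c4 * d2 + c1 * d5 + c5 * d1 + c2 * d4)
        * ((1 + x ^ 2)⁻¹ * (1 + y ^ 2)⁻¹) := by positivity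
    refine this.trans ?_
    nlinarith [hrest]
  · have b1 := prod_bound (h4 t x ht) (k2 t y ht) hX hY hc4 hd2
    have b2 := prod_bound (h1 t x ht) (k5 t y ht) hX hY hc1 hd5
    have b3 := prod_bound (h5 t x ht) (k1 t y ht) hX hY hc5 hd1
    have b4 := prod_bound (h2 t x ht) (k4 t y ht) hX hY hc2 hd4
    have e1 := (norm_add_le (pdx (Pdens u) t x * Pdens v t y)
      (Mdens u t x * pdx (Edens v) t y)).trans (add_le_add b1 b2)
    have e2 := (norm_add_le (pdx (Edens u) t x * Mdens v t y)
      (Pdens u t x * pdx (Pdens v) t y)).trans (add_le_add b3 b4)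
    have := (norm_sub_le _ _).trans (add_le_add e1 e2)
    have hrest : 0 ≤ (c1 * d2 + c2 * d1) * ((1 + x ^ 2)⁻¹ * (1 + y ^ 2)⁻¹) := by positivity
    refine this.trans ?_
    nlinarith [hrest]

lemma cont_Gslice (hu : Nice u) (hv : Nice v) (t : ℝ) :
    Continuous fun p : ℝ × ℝ => Gfun u v t p.1 p.2 := by
  unfold Gfun
  exact (((contx_Mdens hu t).comp continuous_snd).mul
      ((contx_Pdens hv t).comp continuous_fst)).sub
    (((contx_Pdens hu t).comp continuous_snd).mul ((contx_Mdens hv t).comp continuous_fst))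

lemma cont_Gslice' (hu : Nice u) (hv : Nice v) (t : ℝ) :
    Continuous fun p : ℝ × ℝ => Gfun' u v t p.1 p.2 := by
  unfold Gfun'
  exact ((((contx_pdx_Pdens hu t).comp continuous_snd).mul
      ((contx_Pdens hv t).comp continuous_fst)).add
    (((contx_Mdens hu t).comp continuous_snd).mul
      ((contx_pdx_Edens hv t).comp continuous_fst))).sub
    ((((contx_pdx_Edens hu t).comp continuous_snd).mul
      ((contx_Mdens hv t).comp continuous_fst)).add
    (((contx_Pdens hu t).comp continuous_snd).mul
      ((contx_pdx_Pdens hv t).comp continuous_fst)))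

lemma Ffun_eq_ind (t : ℝ) : Ffun u v t
    = Set.indicator {p : ℝ × ℝ | p.1 < p.2} (fun p => Gfun u v t p.1 p.2) := by
  funext p
  simp only [Ffun, Set.indicator_apply, Set.mem_Ioi, Set.mem_setOf_eq]

lemma Ffun'_eq_ind (t : ℝ) : Ffun' u v t
    = Set.indicator {p : ℝ × ℝ | p.1 < p.2} (fun p => Gfun' u v t p.1 p.2) := by
  funext p
  simp only [Ffun', Set.indicator_apply, Set.mem_Ioi, Set.mem_setOf_eq]

lemma measurable_halfplane : MeasurableSet {p : ℝ × ℝ | p.1 < p.2} :=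
  measurableSet_lt measurable_fst measurable_snd

lemma aesm_Ffun (hu : Nice u) (hv : Nice v) (t : ℝ) :
    AEStronglyMeasurable (Ffun u v t) (volume : Measure (ℝ × ℝ)) := by
  rw [Ffun_eq_ind]
  exact (cont_Gslice hu hv t).aestronglyMeasurable.indicator measurable_halfplane

lemma aesm_Ffun' (hu : Nice u) (hv : Nice v) (t : ℝ) :
    AEStronglyMeasurable (Ffun' u v t) (volume : Measure (ℝ × ℝ)) := by
  rw [Ffun'_eq_ind]
  exact (cont_Gslice' hu hv t).aestronglyMeasurable.indicator measurable_halfplane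

lemma integrable_bound2 (K : ℝ) :
    Integrable (fun p : ℝ × ℝ => K * ((1 + p.1 ^ 2)⁻¹ * (1 + p.2 ^ 2)⁻¹))
      (volume : Measure (ℝ × ℝ)) := by
  have h := (integrable_inv_one_add_sq.mul_prod integrable_inv_one_add_sq).const_mul K
  rw [← Measure.volume_eq_prod] at h
  exact h


lemma integrable_Ffun (hu : Nice u) (hv : Nice v) (t : ℝ) :
    Integrable (Ffun u v t) (volume : Measure (ℝ × ℝ)) := by
  obtain ⟨K, hK0, hK⟩ := Gbound hu hv |t|
  refine Integrable.mono' (integrable_bound2 K) (aesm_Ffun hu hv t) (ae_of_all _ fun p => ?_)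
  have h1 : ‖Ffun u v t p‖ ≤ ‖Gfun u v t p.1 p.2‖ := norm_indicator_le_norm_self _ _
  have h2 := (hK t p.1 p.2 le_rfl).1
  refine (h1.trans h2).trans (le_of_eq ?_)
  ring

lemma integrable_Ffun' (hu : Nice u) (hv : Nice v) (t : ℝ) :
    Integrable (Ffun' u v t) (volume : Measure (ℝ × ℝ)) := by
  obtain ⟨K, hK0, hK⟩ := Gbound hu hv |t|
  refine Integrable.mono' (integrable_bound2 K) (aesm_Ffun' hu hv t) (ae_of_all _ fun p => ?_)
  have h1 : ‖Ffun' u v t p‖ ≤ ‖Gfun' u v t p.1 p.2‖ := norm_indicator_le_norm_self _ _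
  have h2 := (hK t p.1 p.2 le_rfl).2
  refine (h1.trans h2).trans (le_of_eq ?_)
  ring

lemma interactionI_eq (hu : Nice u) (hv : Nice v) :
    interactionI u v = fun t => ∫ p : ℝ × ℝ, Ffun u v t p := by
  funext t
  have hInt : Integrable (Function.uncurry fun y x => Ffun u v t (y, x))
      (volume.prod volume) := by
    rw [← Measure.volume_eq_prod]; exact integrable_Ffun hu hv t
  have h := integral_integral hInt
  calc interactionI u v t = ∫ y : ℝ, ∫ x in Ioi y, Gfun u v t y x := rfl
    _ = ∫ y : ℝ, ∫ x : ℝ, Ffun u v t (y, x) := by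
        congr 1
        funext y
        exact (integral_indicator measurableSet_Ioi).symm
    _ = ∫ p : ℝ × ℝ, Ffun u v t p := h

lemma inner_integral_Ffun' (hu : Nice u) (hv : Nice v) (t₀ y : ℝ) :
    (∫ x : ℝ, Ffun' u v t₀ (y, x))
      = - (Pdens u t₀ y * Pdens v t₀ y)
        + (∫ x in Ioi y, Mdens u t₀ x) * pdx (Edens v) t₀ y
        + Edens u t₀ y * Mdens v t₀ y
        - (∫ x in Ioi y, Pdens u t₀ x) * pdx (Pdens v) t₀ y := by
  have e0 : (∫ x : ℝ, Ffun' u v t₀ (y, x)) = ∫ x in Ioi y, Gfun' u v t₀ y x :=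
    integral_indicator measurableSet_Ioi
  have i1 : IntegrableOn (fun x => pdx (Pdens u) t₀ x * Pdens v t₀ y) (Ioi y) volume :=
    ((integrable_pdx_Pdens hu t₀).mul_const _).integrableOn
  have i2 : IntegrableOn (fun x => Mdens u t₀ x * pdx (Edens v) t₀ y) (Ioi y) volume :=
    ((integrable_Mdens hu t₀).mul_const _).integrableOn
  have i3 : IntegrableOn (fun x => pdx (Edens u) t₀ x * Mdens v t₀ y) (Ioi y) volume :=
    ((integrable_pdx_Edens hu t₀).mul_const _).integrableOn
  have i4 : IntegrableOn (fun x => Pdens u t₀ x * pdx (Pdens v) t₀ y) (Ioi y) volume :=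
    ((integrable_Pdens hu t₀).mul_const _).integrableOn
  have i12 : IntegrableOn (fun x => pdx (Pdens u) t₀ x * Pdens v t₀ y
      + Mdens u t₀ x * pdx (Edens v) t₀ y) (Ioi y) volume := i1.add i2
  have i34 : IntegrableOn (fun x => pdx (Edens u) t₀ x * Mdens v t₀ y
      + Pdens u t₀ x * pdx (Pdens v) t₀ y) (Ioi y) volume := i3.add i4
  rw [e0]
  unfold Gfun'
  rw [integral_sub i12 i34, integral_add i1 i2, integral_add i3 i4,
    integral_mul_const, integral_mul_const, integral_mul_const, integral_mul_const,
    integral_Ioi_pdx_Pdens hu t₀ y, integral_Ioi_pdx_Edens hu t₀ y]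
  ring


lemma integral_Ffun'_eq (hu : Nice u) (hv : Nice v) (t₀ : ℝ) :
    (∫ p : ℝ × ℝ, Ffun' u v t₀ p) = morawetzD u v t₀ := by
  set A : ℝ → ℂ := fun z => ∫ x in Ioi z, Mdens u t₀ x with hA
  set B : ℝ → ℂ := fun z => ∫ x in Ioi z, Pdens u t₀ x with hB
  have hInt : Integrable (Function.uncurry fun y x => Ffun' u v t₀ (y, x))
      (volume.prod volume) := by
    rw [← Measure.volume_eq_prod]; exact integrable_Ffun' hu hv t₀
  have hiter : (∫ p : ℝ × ℝ, Ffun' u v t₀ p) = ∫ y : ℝ, ∫ x : ℝ, Ffun' u v t₀ (y, x) :=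
    (integral_integral hInt).symm
  have hfun : (fun y : ℝ => ∫ x : ℝ, Ffun' u v t₀ (y, x))
      = fun y => - (Pdens u t₀ y * Pdens v t₀ y) + A y * pdx (Edens v) t₀ y
          + Edens u t₀ y * Mdens v t₀ y - B y * pdx (Pdens v) t₀ y := by
    funext y; exact inner_integral_Ffun' hu hv t₀ y
  have hAderiv : ∀ y : ℝ, HasDerivAt A (- Mdens u t₀ y) y := fun y =>
    hasDerivAt_tail _ (integrable_Mdens hu t₀) (contx_Mdens hu t₀) y
  have hBderiv : ∀ y : ℝ, HasDerivAt B (- Pdens u t₀ y) y := fun y =>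
    hasDerivAt_tail _ (integrable_Pdens hu t₀) (contx_Pdens hu t₀) y
  have hAcont : Continuous A := continuous_iff_continuousAt.2 fun y => (hAderiv y).continuousAt
  have hBcont : Continuous B := continuous_iff_continuousAt.2 fun y => (hBderiv y).continuousAt
  set CA : ℝ := ∫ x : ℝ, ‖Mdens u t₀ x‖ with hCA
  set CB : ℝ := ∫ x : ℝ, ‖Pdens u t₀ x‖ with hCB
  have hCA0 : 0 ≤ CA := integral_nonneg fun x => norm_nonneg _
  have hCB0 : 0 ≤ CB := integral_nonneg fun x => norm_nonneg _
  have hAbd : ∀ y, ‖A y‖ ≤ CA := fun y => tail_bound _ (integrable_Mdens hu t₀) y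
  have hBbd : ∀ y, ‖B y‖ ≤ CB := fun y => tail_bound _ (integrable_Pdens hu t₀) y
  have jPP : Integrable (fun y => Pdens u t₀ y * Pdens v t₀ y) :=
    ((decBd_Pdens hu).mul (decBd_Pdens hv)).integrable t₀
      ((contx_Pdens hu t₀).mul (contx_Pdens hv t₀))
  have jEM : Integrable (fun y => Edens u t₀ y * Mdens v t₀ y) :=
    ((decBd_Edens hu).mul (decBd_Mdens hv)).integrable t₀
      ((contx_Edens hu t₀).mul (contx_Mdens hv t₀))
  have jEvMu : Integrable (fun y => Edens v t₀ y * Mdens u t₀ y) :=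
    ((decBd_Edens hv).mul (decBd_Mdens hu)).integrable t₀
      ((contx_Edens hv t₀).mul (contx_Mdens hu t₀))
  have jPvPu : Integrable (fun y => Pdens v t₀ y * Pdens u t₀ y) :=
    ((decBd_Pdens hv).mul (decBd_Pdens hu)).integrable t₀
      ((contx_Pdens hv t₀).mul (contx_Pdens hu t₀))
  obtain ⟨Ce, hCe0, hCe⟩ := (decBd_pdx_Edens hv).pointwise |t₀|
  obtain ⟨Cp, hCp0, hCp⟩ := (decBd_pdx_Pdens hv).pointwise |t₀|
  have jq2 : Integrable (fun y => pdx (Edens v) t₀ y * A y) := by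
    refine Integrable.mono' (integrable_inv_one_add_sq.const_mul (Ce * CA))
      (((contx_pdx_Edens hv t₀).mul hAcont).aestronglyMeasurable) (ae_of_all _ fun y => ?_)
    rw [norm_mul]
    calc ‖pdx (Edens v) t₀ y‖ * ‖A y‖ ≤ (Ce * (1 + y ^ 2)⁻¹) * CA :=
          mul_le_mul (hCe t₀ y le_rfl) (hAbd y) (norm_nonneg _) (by positivity)
      _ = Ce * CA * (1 + y ^ 2)⁻¹ := by ring
  have jq4 : Integrable (fun y => pdx (Pdens v) t₀ y * B y) := by
    refine Integrable.mono' (integrable_inv_one_add_sq.const_mul (Cp * CB))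
      (((contx_pdx_Pdens hv t₀).mul hBcont).aestronglyMeasurable) (ae_of_all _ fun y => ?_)
    rw [norm_mul]
    calc ‖pdx (Pdens v) t₀ y‖ * ‖B y‖ ≤ (Cp * (1 + y ^ 2)⁻¹) * CB :=
          mul_le_mul (hCp t₀ y le_rfl) (hBbd y) (norm_nonneg _) (by positivity)
      _ = Cp * CB * (1 + y ^ 2)⁻¹ := by ring
  have jq2' : Integrable (fun y => A y * pdx (Edens v) t₀ y) := by
    have h : (fun y => A y * pdx (Edens v) t₀ y) = fun y => pdx (Edens v) t₀ y * A y :=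
      funext fun y => mul_comm _ _
    rw [h]; exact jq2
  have jq4' : Integrable (fun y => B y * pdx (Pdens v) t₀ y) := by
    have h : (fun y => B y * pdx (Pdens v) t₀ y) = fun y => pdx (Pdens v) t₀ y * B y :=
      funext fun y => mul_comm _ _
    rw [h]; exact jq4
  have jfA : Integrable (fun y => Edens v t₀ y * A y) := by
    refine Integrable.mono' ((integrable_Edens hv t₀).norm.mul_const CA)
      (((contx_Edens hv t₀).mul hAcont).aestronglyMeasurable) (ae_of_all _ fun y => ?_)
    rw [norm_mul]
    exact mul_le_mul_of_nonneg_left (hAbd y) (norm_nonneg _)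
  have jfB : Integrable (fun y => Pdens v t₀ y * B y) := by
    refine Integrable.mono' ((integrable_Pdens hv t₀).norm.mul_const CB)
      (((contx_Pdens hv t₀).mul hBcont).aestronglyMeasurable) (ae_of_all _ fun y => ?_)
    rw [norm_mul]
    exact mul_le_mul_of_nonneg_left (hBbd y) (norm_nonneg _)
  have ibpA : ∫ y : ℝ, pdx (Edens v) t₀ y * A y = ∫ y : ℝ, Edens v t₀ y * Mdens u t₀ y := by
    have hder : ∀ y : ℝ, HasDerivAt (fun z => Edens v t₀ z * A z)
        (pdx (Edens v) t₀ y * A y - Edens v t₀ y * Mdens u t₀ y) y := by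
      intro y
      have h := (hasDerivAt_Edens_x' hv t₀ y).mul (hAderiv y)
      refine h.congr_deriv ?_
      ring
    have h0 := integral_eq_zero_of_hasDerivAt_of_integrable hder (jq2.sub jEvMu) jfA
    rw [integral_sub jq2 jEvMu, sub_eq_zero] at h0
    exact h0
  have ibpB : ∫ y : ℝ, pdx (Pdens v) t₀ y * B y = ∫ y : ℝ, Pdens v t₀ y * Pdens u t₀ y := by
    have hder : ∀ y : ℝ, HasDerivAt (fun z => Pdens v t₀ z * B z)
        (pdx (Pdens v) t₀ y * B y - Pdens v t₀ y * Pdens u t₀ y) y := by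
      intro y
      have h := (hasDerivAt_Pdens_x' hv t₀ y).mul (hBderiv y)
      refine h.congr_deriv ?_
      ring
    have h0 := integral_eq_zero_of_hasDerivAt_of_integrable hder (jq4.sub jPvPu) jfB
    rw [integral_sub jq4 jPvPu, sub_eq_zero] at h0
    exact h0
  have s1 : Integrable (fun y => - (Pdens u t₀ y * Pdens v t₀ y)
      + A y * pdx (Edens v) t₀ y) := jPP.neg.add jq2'
  have s2 : Integrable (fun y => - (Pdens u t₀ y * Pdens v t₀ y)
      + A y * pdx (Edens v) t₀ y + Edens u t₀ y * Mdens v t₀ y) := s1.add jEM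
  have s0 : Integrable (fun y => - (Pdens u t₀ y * Pdens v t₀ y)) := jPP.neg
  rw [hiter, hfun, integral_sub s2 jq4', integral_add s1 jEM, integral_add s0 jq2',
    integral_neg]
  have cA : ∫ y : ℝ, A y * pdx (Edens v) t₀ y = ∫ y : ℝ, Edens v t₀ y * Mdens u t₀ y := by
    have h : (fun y => A y * pdx (Edens v) t₀ y) = fun y => pdx (Edens v) t₀ y * A y :=
      funext fun y => mul_comm _ _
    rw [h]; exact ibpA
  have cB : ∫ y : ℝ, B y * pdx (Pdens v) t₀ y = ∫ y : ℝ, Pdens v t₀ y * Pdens u t₀ y := by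
    have h : (fun y => B y * pdx (Pdens v) t₀ y) = fun y => pdx (Pdens v) t₀ y * B y :=
      funext fun y => mul_comm _ _
    rw [h]; exact ibpB
  rw [cA, cB]
  have jME' : Integrable (fun x => Mdens u t₀ x * Edens v t₀ x) :=
    ((decBd_Mdens hu).mul (decBd_Edens hv)).integrable t₀
      ((contx_Mdens hu t₀).mul (contx_Edens hv t₀))
  have jMvEu : Integrable (fun x => Mdens v t₀ x * Edens u t₀ x) :=
    ((decBd_Mdens hv).mul (decBd_Edens hu)).integrable t₀
      ((contx_Mdens hv t₀).mul (contx_Edens hu t₀))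
  have jPP2 : Integrable (fun x => 2 * Pdens u t₀ x * Pdens v t₀ x) :=
    (((decBd_Pdens hu).const_mul 2).mul (decBd_Pdens hv)).integrable t₀
      ((continuous_const.mul (contx_Pdens hu t₀)).mul (contx_Pdens hv t₀))
  have hmor : morawetzD u v t₀ = ((∫ x : ℝ, Mdens u t₀ x * Edens v t₀ x)
      + ∫ x : ℝ, Mdens v t₀ x * Edens u t₀ x) - ∫ x : ℝ, 2 * Pdens u t₀ x * Pdens v t₀ x := by
    have h : morawetzD u v t₀ = ∫ x : ℝ, (Mdens u t₀ x * Edens v t₀ x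
        + Mdens v t₀ x * Edens u t₀ x - 2 * Pdens u t₀ x * Pdens v t₀ x) := rfl
    have s3 : Integrable (fun x => Mdens u t₀ x * Edens v t₀ x
        + Mdens v t₀ x * Edens u t₀ x) := jME'.add jMvEu
    rw [h, integral_sub s3 jPP2, integral_add jME' jMvEu]
  rw [hmor]
  have c1 : ∫ y : ℝ, Edens v t₀ y * Mdens u t₀ y = ∫ x : ℝ, Mdens u t₀ x * Edens v t₀ x := by
    congr 1; funext y; ring
  have c2 : ∫ y : ℝ, Edens u t₀ y * Mdens v t₀ y = ∫ x : ℝ, Mdens v t₀ x * Edens u t₀ x := by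
    congr 1; funext y; ring
  have c3 : ∫ y : ℝ, Pdens v t₀ y * Pdens u t₀ y = ∫ x : ℝ, Pdens u t₀ x * Pdens v t₀ x := by
    congr 1; funext y; ring
  have c4 : ∫ x : ℝ, 2 * Pdens u t₀ x * Pdens v t₀ x
      = 2 * ∫ x : ℝ, Pdens u t₀ x * Pdens v t₀ x := by
    simp_rw [mul_assoc]
    exact integral_const_mul 2 _
  rw [c1, c2, c3, c4]
  ring


lemma hasDerivAt_interactionI (hu : Nice u) (hv : Nice v) (heu : Eqn u) (hev : Eqn v)
    (t₀ : ℝ) : HasDerivAt (interactionI u v) (morawetzD u v t₀) t₀ := by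
  obtain ⟨K, hK0, hK⟩ := Gbound hu hv (|t₀| + 1)
  have hball : ∀ t : ℝ, t ∈ ball t₀ 1 → |t| ≤ |t₀| + 1 := by
    intro t ht
    rw [mem_ball, Real.dist_eq] at ht
    have h := abs_sub_abs_le_abs_sub t t₀
    linarith
  have hbnd : ∀ᵐ p ∂(volume : Measure (ℝ × ℝ)), ∀ t ∈ ball t₀ 1,
      ‖Ffun' u v t p‖ ≤ K * ((1 + p.1 ^ 2)⁻¹ * (1 + p.2 ^ 2)⁻¹) := by
    refine ae_of_all _ fun p t ht => ?_
    have h1 : ‖Ffun' u v t p‖ ≤ ‖Gfun' u v t p.1 p.2‖ := norm_indicator_le_norm_self _ _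
    have h2 := (hK t p.1 p.2 (hball t ht)).2
    exact (h1.trans h2).trans (le_of_eq (by ring))
  have hdiff : ∀ᵐ p ∂(volume : Measure (ℝ × ℝ)), ∀ t ∈ ball t₀ 1,
      HasDerivAt (fun s => Ffun u v s p) (Ffun' u v t p) t := by
    refine ae_of_all _ fun p t _ => ?_
    by_cases hp : p.2 ∈ Ioi p.1
    · have e1 : (fun s => Ffun u v s p) = fun s => Gfun u v s p.1 p.2 := by
        funext s; simp only [Ffun, Set.indicator_of_mem hp]
      have e2 : Ffun' u v t p = Gfun' u v t p.1 p.2 := by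
        simp only [Ffun', Set.indicator_of_mem hp]
      rw [e1, e2]
      exact ((hasDerivAt_Mdens_t hu heu t p.2).mul (hasDerivAt_Pdens_t hv hev t p.1)).sub
        ((hasDerivAt_Pdens_t hu heu t p.2).mul (hasDerivAt_Mdens_t hv hev t p.1))
    · have e1 : (fun s => Ffun u v s p) = fun _ => 0 := by
        funext s; simp only [Ffun, Set.indicator_of_notMem hp]
      have e2 : Ffun' u v t p = 0 := by
        simp only [Ffun', Set.indicator_of_notMem hp]
      rw [e1, e2]
      exact hasDerivAt_const t 0
  have key := hasDerivAt_integral_of_dominated_loc_of_deriv_le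
    (F := Ffun u v) (F' := Ffun' u v) (x₀ := t₀)
    (bound := fun p : ℝ × ℝ => K * ((1 + p.1 ^ 2)⁻¹ * (1 + p.2 ^ 2)⁻¹))
    (ball_mem_nhds t₀ one_pos)
    (Eventually.of_forall fun t => aesm_Ffun hu hv t)
    (integrable_Ffun hu hv t₀)
    (aesm_Ffun' hu hv t₀)
    hbnd
    (integrable_bound2 K)
    hdiff
  rw [interactionI_eq hu hv, ← integral_Ffun'_eq hu hv t₀]
  exact key.2

end IM


/-- Monotonicity of the interaction Morawetz functional: for smooth
Schwartz-class (uniformly on compact time intervals) solutions `u`, `v` of the linear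
Schrödinger equation, `I` is differentiable with
`dI/dt = ∫ (M(u)E(v) + M(v)E(u) − 2P(u)P(v)) = 4∫ |∂ₓ(u·conj v)|² ≥ 0`;
in particular `I` is nondecreasing. -/
theorem interaction_morawetz_monotone (u v : ℝ → ℝ → ℂ)
    (hu : ContDiff ℝ (⊤ : ℕ∞) fun p : ℝ × ℝ => u p.1 p.2)
    (hv : ContDiff ℝ (⊤ : ℕ∞) fun p : ℝ × ℝ => v p.1 p.2)
    (hueq : ∀ t x : ℝ, Complex.I * pdt u t x + pdx (pdx u) t x = 0)
    (hveq : ∀ t x : ℝ, Complex.I * pdt v t x + pdx (pdx v) t x = 0)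
    (huS : ∀ (k n : ℕ) (T : ℝ), ∃ C : ℝ, ∀ t x : ℝ, |t| ≤ T →
      |x| ^ k * ‖iteratedDeriv n (fun y => u t y) x‖ ≤ C)
    (hvS : ∀ (k n : ℕ) (T : ℝ), ∃ C : ℝ, ∀ t x : ℝ, |t| ≤ T →
      |x| ^ k * ‖iteratedDeriv n (fun y => v t y) x‖ ≤ C) :
    (∀ t : ℝ, HasDerivAt (interactionI u v) (morawetzD u v t) t) ∧
    (∀ t : ℝ, morawetzD u v t
      = 4 * ∫ x : ℝ, (deriv (fun y => u t y * conj (v t y)) x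
          * conj (deriv (fun y => u t y * conj (v t y)) x))) ∧
    (∀ t : ℝ, 0 ≤ (morawetzD u v t).re) ∧
    Monotone (fun t => (interactionI u v t).re) := by
  have hnu : IM.Nice u := ⟨hu, huS⟩
  have hnv : IM.Nice v := ⟨hv, hvS⟩
  have heu : IM.Eqn u := hueq
  have hev : IM.Eqn v := hveq
  refine ⟨fun t => IM.hasDerivAt_interactionI hnu hnv heu hev t,
    fun t => IM.morawetz_identity hnu hnv t,
    fun t => IM.morawetzD_re_nonneg hnu hnv t, ?_⟩
  have hdiff : ∀ t : ℝ, HasDerivAt (fun s => (interactionI u v s).re)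
      ((morawetzD u v t).re) t := by
    intro t
    have h := IM.hasDerivAt_interactionI hnu hnv heu hev t
    have h2 := (Complex.reCLM.hasFDerivAt (x := interactionI u v t)).comp_hasDerivAt t h
    exact h2
  refine monotone_of_deriv_nonneg (fun t => (hdiff t).differentiableAt) fun t => ?_
  rw [(hdiff t).deriv]
  exact IM.morawetzD_re_nonneg hnu hnv t
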